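/- Let S be a finite regular *-semigroup, let D be a D-class of S, let T = ⟨D⟩ be the subsemigroup of S generated by D, and let P = P(S) ∩ D. If T is generated by its idempotents, then T = ⟨P⟩ and idrank(T) = rank(T) = |P|. -/

import Mathlib

/-- Green's R-relation: `x R y` iff `x S¹ = y S¹`, i.e. each of `x`, `y` lies
in the other's principal right ideal. -/
def RRel {S : Type*} [Semigroup S] (x y : S) : Prop :=
  (x = y ∨ ∃ u, x = y * u) ∧ (y = x ∨ ∃ v, y = x * v)

/-- Green's L-relation: `x L y` iff `S¹ x = S¹ y`. -/
def LRel {S : Type*} [Semigroup S] (x y : S) : Prop :=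
  (x = y ∨ ∃ u, x = u * y) ∧ (y = x ∨ ∃ v, y = v * x)

/-- Green's D-relation: `D = R ∘ L`. -/
def DRel {S : Type*} [Semigroup S] (x y : S) : Prop :=
  ∃ z, RRel x z ∧ LRel z y

/-- The rank of a subsemigroup: the least size of a generating set. -/
noncomputable def sgRank {S : Type*} [Semigroup S] (T : Subsemigroup S) : ℕ :=
  sInf {k | ∃ X : Finset S, X.card = k ∧ Subsemigroup.closure ↑X = T}

/-- The idempotent rank of a subsemigroup: the least size of a generating set
consisting of idempotents. -/
noncomputable def sgIdRank {S : Type*} [Semigroup S] (T : Subsemigroup S) : ℕ :=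
  sInf {k | ∃ X : Finset S, X.card = k ∧ (∀ x ∈ X, x * x = x) ∧ Subsemigroup.closure ↑X = T}


private def pw {S : Type*} [Semigroup S] (x : S) : ℕ → S
  | 0 => x
  | n+1 => x * pw x n

private lemma pw_succ {S : Type*} [Semigroup S] (x : S) (n : ℕ) :
    pw x (n+1) = x * pw x n := rfl

private lemma pw_succ' {S : Type*} [Semigroup S] (x : S) (n : ℕ) :
    pw x (n+1) = pw x n * x := by
  induction n with
  | zero => rfl
  | succ n ih => rw [pw_succ x (n+1), ih, ← mul_assoc, ← pw_succ, ih]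

private lemma pw_add {S : Type*} [Semigroup S] (x : S) (a b : ℕ) :
    pw x (a + b + 1) = pw x a * pw x b := by
  induction b with
  | zero => rw [pw_succ']; rfl
  | succ b ih =>
      have h : a + (b+1) + 1 = (a + b + 1) + 1 := by omega
      rw [h, pw_succ', ih, pw_succ' x b, mul_assoc]

private lemma exists_idem_pw_aux {S : Type*} [Semigroup S] (x : S) (m k : ℕ) (hk : 1 ≤ k)
    (heq : pw x m = pw x (m + k)) : ∃ N, pw x N * pw x N = pw x N := by
  have step : ∀ j, m ≤ j → pw x j = pw x (j + k) := by
    intro j hj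
    obtain ⟨i, rfl⟩ := Nat.exists_eq_add_of_le hj
    cases i with
    | zero => simpa using heq
    | succ i =>
        have h2 : m + (i+1) + k = (m+k) + i + 1 := by omega
        rw [h2, show m + (i+1) = m + i + 1 from by omega, pw_add, pw_add, heq]
  have period : ∀ t j, m ≤ j → pw x j = pw x (j + t * k) := by
    intro t
    induction t with
    | zero => intro j hj; simp
    | succ t ih =>
        intro j hj
        calc pw x j = pw x (j + t * k) := ih j hj
          _ = pw x (j + t * k + k) := step _ (by omega)
          _ = pw x (j + (t+1) * k) := by congr 1; ring
  refine ⟨k * (m+1) - 1, ?_⟩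
  set N := k * (m+1) - 1 with hN
  have hpos : 0 < k * (m+1) := Nat.mul_pos hk (by omega)
  have hNsucc : N + 1 = k * (m+1) := by omega
  have hm1 : m + 1 ≤ k * (m+1) := Nat.le_mul_of_pos_left (m+1) hk
  have hNm : m ≤ N := by omega
  have key : pw x N = pw x (N + N + 1) := by
    have h := period (m+1) N hNm
    rw [h]
    congr 1
    rw [Nat.mul_comm, ← hNsucc]
    omega
  rw [← pw_add, ← key]

private lemma exists_idem_pw {S : Type*} [Semigroup S] [Fintype S] (x : S) :
    ∃ N, pw x N * pw x N = pw x N := by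
  obtain ⟨m', n', hne, heq⟩ := Finite.exists_ne_map_eq_of_infinite (pw x)
  rcases Nat.lt_or_ge m' n' with h | h
  · exact exists_idem_pw_aux x m' (n' - m') (by omega)
      (by rw [heq]; congr 1; omega)
  · have h' : n' < m' := by omega
    exact exists_idem_pw_aux x n' (m' - n') (by omega)
      (by rw [← heq]; congr 1; omega)

/-- Right stability ingredient: if `y = c * y * d` then `y = y * d * w` for some `w`. -/
private lemma stabR {S : Type*} [Semigroup S] [Fintype S] {y c d : S}
    (h : y = c * y * d) : ∃ w, y = y * d * w := by
  have iter : ∀ n, y = pw c n * y * pw d n := by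
    intro n
    induction n with
    | zero => exact h
    | succ n ih =>
        calc y = c * y * d := h
          _ = c * (pw c n * y * pw d n) * d := by rw [← ih]
          _ = (c * pw c n) * y * (pw d n * d) := by
              simp only [mul_assoc]
          _ = pw c (n+1) * y * pw d (n+1) := by rw [← pw_succ, ← pw_succ']
  obtain ⟨N, hNidem⟩ := exists_idem_pw d
  have hyd : y * pw d N = y := by
    calc y * pw d N = (pw c N * y * pw d N) * pw d N := by rw [← iter N]
      _ = pw c N * y * (pw d N * pw d N) := by simp only [mul_assoc]
      _ = pw c N * y * pw d N := by rw [hNidem]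
      _ = y := (iter N).symm
  cases N with
  | zero =>
      refine ⟨d, ?_⟩
      have h0 : y * d = y := hyd
      calc y = y * d := h0.symm
        _ = (y * d) * d := by conv_rhs => rw [h0]
  | succ n =>
      exact ⟨pw d n, by rw [mul_assoc, ← pw_succ, hyd]⟩

/-- Left stability ingredient: if `y = c * y * d` then `y = w * (c * y)` for some `w`. -/
private lemma stabL {S : Type*} [Semigroup S] [Fintype S] {y c d : S}
    (h : y = c * y * d) : ∃ w, y = w * (c * y) := by
  have iter : ∀ n, y = pw c n * y * pw d n := by
    intro n
    induction n with
    | zero => exact h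
    | succ n ih =>
        calc y = c * y * d := h
          _ = c * (pw c n * y * pw d n) * d := by rw [← ih]
          _ = (c * pw c n) * y * (pw d n * d) := by
              simp only [mul_assoc]
          _ = pw c (n+1) * y * pw d (n+1) := by rw [← pw_succ, ← pw_succ']
  obtain ⟨N, hNidem⟩ := exists_idem_pw c
  have hyc : pw c N * y = y := by
    calc pw c N * y = pw c N * (pw c N * y * pw d N) := by rw [← iter N]
      _ = (pw c N * pw c N) * y * pw d N := by simp only [mul_assoc]
      _ = pw c N * y * pw d N := by rw [hNidem]
      _ = y := (iter N).symm
  cases N with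
  | zero =>
      refine ⟨c, ?_⟩
      have h0 : c * y = y := hyc
      calc y = c * y := h0.symm
        _ = c * (c * y) := by conv_rhs => rw [h0]
  | succ n =>
      refine ⟨pw c n, ?_⟩
      calc y = pw c (n+1) * y := hyc.symm
        _ = (pw c n * c) * y := by rw [pw_succ']
        _ = pw c n * (c * y) := by rw [mul_assoc]


section Green
variable {S : Type*} [Semigroup S]

private def leR (x y : S) : Prop := ∃ u, x = y * u
private def leL (x y : S) : Prop := ∃ u, x = u * y
private def leJ (x y : S) : Prop := ∃ u v, x = u * y * v

private lemma leR_trans {x y z : S} : leR x y → leR y z → leR x z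
  | ⟨u, h1⟩, ⟨v, h2⟩ => ⟨v * u, by rw [h1, h2, mul_assoc]⟩
private lemma leL_trans {x y z : S} : leL x y → leL y z → leL x z
  | ⟨u, h1⟩, ⟨v, h2⟩ => ⟨u * v, by rw [h1, h2, mul_assoc]⟩
private lemma leJ_trans {x y z : S} : leJ x y → leJ y z → leJ x z
  | ⟨u, v, h1⟩, ⟨u', v', h2⟩ => ⟨u * u', v' * v, by rw [h1, h2]; simp only [mul_assoc]⟩

variable (star : S → S)

private lemma leR_refl (hreg : ∀ x : S, x * star x * x = x) (x : S) : leR x x :=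
  ⟨star x * x, by rw [← mul_assoc, hreg]⟩

private lemma leL_refl (hreg : ∀ x : S, x * star x * x = x) (x : S) : leL x x :=
  ⟨x * star x, (hreg x).symm⟩

private lemma leR_of_or (hreg : ∀ x : S, x * star x * x = x) {x y : S}
    (h : x = y ∨ ∃ u, x = y * u) : leR x y := by
  rcases h with rfl | hu
  · exact leR_refl star hreg x
  · exact hu

private lemma leL_of_or (hreg : ∀ x : S, x * star x * x = x) {x y : S}
    (h : x = y ∨ ∃ u, x = u * y) : leL x y := by
  rcases h with rfl | hu
  · exact leL_refl star hreg x
  · exact hu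

private lemma leJ_of_leR (hreg : ∀ x : S, x * star x * x = x) {x y : S}
    (h : leR x y) : leJ x y := by
  obtain ⟨u, h⟩ := h
  exact ⟨y * star y, u, by rw [hreg, h]⟩

private lemma leJ_of_leL (hreg : ∀ x : S, x * star x * x = x) {x y : S}
    (h : leL x y) : leJ x y := by
  obtain ⟨u, h⟩ := h
  refine ⟨u, star y * y, ?_⟩
  calc x = u * y := h
    _ = u * (y * star y * y) := by rw [hreg]
    _ = u * (y * (star y * y)) := by rw [mul_assoc y]
    _ = u * y * (star y * y) := by rw [mul_assoc]

/-- Stability (R form): if `y ≤_J y*t` then `y ≤_R y*t`. -/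
private lemma stR [Fintype S] {y t : S} (h : leJ y (y * t)) : leR y (y * t) := by
  obtain ⟨u, v, h⟩ := h
  have h' : y = u * y * (t * v) := by
    conv_lhs => rw [h]
    simp only [mul_assoc]
  obtain ⟨w, hw⟩ := stabR h'
  refine ⟨v * w, ?_⟩
  calc y = y * (t * v) * w := hw
    _ = y * t * (v * w) := by simp only [mul_assoc]

/-- Stability (L form): if `y ≤_J t*y` then `y ≤_L t*y`. -/
private lemma stL [Fintype S] {y t : S} (h : leJ y (t * y)) : leL y (t * y) := by
  obtain ⟨u, v, h⟩ := h
  have h' : y = (u * t) * y * v := by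
    conv_lhs => rw [h]
    simp only [mul_assoc]
  obtain ⟨w, hw⟩ := stabL h'
  refine ⟨w * u, ?_⟩
  calc y = w * (u * t * y) := hw
    _ = w * u * (t * y) := by simp only [mul_assoc]

/-- `L ∘ R ⊆ R ∘ L` (in two-sided preorder form). -/
private lemma swapLR {α β γ : S} (hs : leL α β) (ht : leL β α)
    (hu : leR γ β) (hv : leR β γ) :
    ∃ z, (leR α z ∧ leR z α) ∧ (leL z γ ∧ leL γ z) := by
  obtain ⟨s, hs⟩ := hs
  obtain ⟨t, ht⟩ := ht
  obtain ⟨u, hu⟩ := hu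
  obtain ⟨v, hv⟩ := hv
  refine ⟨α * u, ⟨⟨v, ?_⟩, ⟨u, rfl⟩⟩, ⟨s, ?_⟩, ⟨t, ?_⟩⟩
  · calc α = s * β := hs
      _ = s * (γ * v) := by rw [← hv]
      _ = s * (β * u * v) := by rw [← hu]
      _ = (s * β) * u * v := by simp only [mul_assoc]
      _ = α * u * v := by rw [← hs]
  · calc α * u = (s * β) * u := by rw [← hs]
      _ = s * (β * u) := by rw [mul_assoc]
      _ = s * γ := by rw [← hu]
  · calc γ = β * u := hu
      _ = (t * α) * u := by rw [← ht]
      _ = t * (α * u) := by rw [mul_assoc]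

end Green

section MainLemmas
variable {S : Type*} [Semigroup S] (star : S → S)

/-- In a finite semigroup, mutual J-comparability implies D-equivalence. -/
private lemma DRel_of_leJ₂ [Fintype S] {a b : S} (hba : leJ b a) (hab : leJ a b) :
    DRel b a := by
  obtain ⟨s, t, hb⟩ := hba
  obtain ⟨u, v, ha⟩ := hab
  have key : a = (u * s) * a * (t * v) := by
    conv_lhs => rw [ha, hb]
    simp only [mul_assoc]
  have h1 : leR a (a * t) := by
    obtain ⟨w, hw⟩ := stabR key
    refine ⟨v * w, ?_⟩
    calc a = a * (t * v) * w := hw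
      _ = a * t * (v * w) := by simp only [mul_assoc]
  have h2 : leR (a * t) a := ⟨t, rfl⟩
  have h3 : leL b (a * t) := ⟨s, by rw [← mul_assoc]; exact hb⟩
  have h4 : leL (a * t) b := by
    obtain ⟨w', hw'⟩ := stabL key
    refine ⟨w' * u, ?_⟩
    calc a * t = (w' * ((u * s) * a)) * t := by rw [← hw']
      _ = (w' * u) * (s * a * t) := by simp only [mul_assoc]
      _ = (w' * u) * b := by rw [← hb]
  obtain ⟨z, ⟨hz1, hz2⟩, hz3, hz4⟩ := swapLR h3 h4 h1 h2
  exact ⟨z, ⟨Or.inr hz1, Or.inr hz2⟩, ⟨Or.inr hz3, Or.inr hz4⟩⟩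

private lemma leJ_of_DRel (hreg : ∀ x : S, x * star x * x = x) {x a : S}
    (h : DRel x a) : leJ x a ∧ leJ a x := by
  obtain ⟨z, hR, hL⟩ := h
  exact ⟨leJ_trans (leJ_of_leR star hreg (leR_of_or star hreg hR.1))
          (leJ_of_leL star hreg (leL_of_or star hreg hL.1)),
    leJ_trans (leJ_of_leL star hreg (leL_of_or star hreg hL.2))
          (leJ_of_leR star hreg (leR_of_or star hreg hR.2))⟩

private lemma DRel_of_R (hreg : ∀ x : S, x * star x * x = x) {x y a : S}
    (h1 : leR x y) (h2 : leR y x) (h : DRel y a) : DRel x a := by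
  obtain ⟨z, hR, hL⟩ := h
  exact ⟨z, ⟨Or.inr (leR_trans h1 (leR_of_or star hreg hR.1)),
    Or.inr (leR_trans (leR_of_or star hreg hR.2) h2)⟩, hL⟩

private lemma DRel_of_L (hreg : ∀ x : S, x * star x * x = x) {x y a : S}
    (h1 : leL x y) (h2 : leL y x) (h : DRel y a) : DRel x a := by
  obtain ⟨z, hR, hL⟩ := h
  obtain ⟨z', ⟨ha1, ha2⟩, hb1, hb2⟩ :=
    swapLR h1 h2 (leR_of_or star hreg hR.2) (leR_of_or star hreg hR.1)
  exact ⟨z', ⟨Or.inr ha1, Or.inr ha2⟩,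
    ⟨Or.inr (leL_trans hb1 (leL_of_or star hreg hL.1)),
     Or.inr (leL_trans (leL_of_or star hreg hL.2) hb2)⟩⟩

private lemma proj_unique (hanti : ∀ x y : S, star (x * y) = star y * star x) {p q : S}
    (hp : star p = p) (hp2 : p * p = p) (hq : star q = q) (hq2 : q * q = q)
    (h1 : leR p q) (h2 : leR q p) : p = q := by
  obtain ⟨u, hu⟩ := h1
  obtain ⟨v, hv⟩ := h2
  have hqp : q * p = p := by
    calc q * p = q * (q * u) := by rw [← hu]
      _ = (q * q) * u := by rw [mul_assoc]
      _ = q * u := by rw [hq2]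
      _ = p := hu.symm
  have hpq : p * q = q := by
    calc p * q = p * (p * v) := by rw [← hv]
      _ = (p * p) * v := by rw [mul_assoc]
      _ = p * v := by rw [hp2]
      _ = q := hv.symm
  calc p = star p := hp.symm
    _ = star (q * p) := by rw [hqp]
    _ = star p * star q := hanti q p
    _ = p * q := by rw [hp, hq]
    _ = q := hpq

private lemma mem_factor {X : Set S} {x : S} (hx : x ∈ Subsemigroup.closure X) :
    ∃ y ∈ X, x = y ∨ ∃ t, x = y * t := by
  refine Subsemigroup.closure_induction (fun y hy => ⟨y, hy, Or.inl rfl⟩)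
    (fun b c _ _ ihb _ => ?_) hx
  obtain ⟨y, hy, hcase⟩ := ihb
  refine ⟨y, hy, Or.inr ?_⟩
  rcases hcase with rfl | ⟨t, ht⟩
  · exact ⟨c, rfl⟩
  · exact ⟨t * c, by rw [ht, mul_assoc]⟩

private lemma leJ_of_mem_closure (hreg : ∀ x : S, x * star x * x = x) {A : Set S} {a : S}
    (hA : ∀ d ∈ A, leJ d a) {b : S} (hb : b ∈ Subsemigroup.closure A) : leJ b a :=
  Subsemigroup.closure_induction (fun y hy => hA y hy)
    (fun y z _ _ ihy _ => leJ_trans (leJ_of_leR star hreg ⟨z, rfl⟩) ihy) hb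

end MainLemmas


/-- Let `S` be a finite regular *-semigroup, `D` the D-class
of an element `a`, `T = ⟨D⟩` and `P = P(S) ∩ D`.  If `T` is generated by its
idempotents, then `T = ⟨P⟩` and `idrank T = rank T = |P|`. -/
theorem idrank_genDClass {S : Type*} [Semigroup S] [Fintype S] (star : S → S)
    (hinv : ∀ x : S, star (star x) = x)
    (hanti : ∀ x y : S, star (x * y) = star y * star x)
    (hreg : ∀ x : S, x * star x * x = x)
    (a : S)
    (hE : Subsemigroup.closure
        {e : S | e ∈ Subsemigroup.closure {x : S | DRel x a} ∧ e * e = e} =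
      Subsemigroup.closure {x : S | DRel x a}) :
    Subsemigroup.closure {p : S | (star p = p ∧ p * p = p) ∧ DRel p a} =
      Subsemigroup.closure {x : S | DRel x a} ∧
    sgIdRank (Subsemigroup.closure {x : S | DRel x a}) =
      Set.ncard {p : S | (star p = p ∧ p * p = p) ∧ DRel p a} ∧
    sgRank (Subsemigroup.closure {x : S | DRel x a}) =
      Set.ncard {p : S | (star p = p ∧ p * p = p) ∧ DRel p a} := by
  classical
  set Dset := {x : S | DRel x a} with hDset
  set Pset := {p : S | (star p = p ∧ p * p = p) ∧ DRel p a} with hPset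
  set T := Subsemigroup.closure Dset with hT
  have hleJa : ∀ b ∈ T, leJ b a := fun b hb =>
    leJ_of_mem_closure star hreg (fun d hd => (leJ_of_DRel star hreg hd).1) hb
  -- Part A : ⟨P⟩ = T
  have hPT : Subsemigroup.closure Pset = T := by
    apply le_antisymm
    · exact Subsemigroup.closure_le.mpr
        (fun p hp => Subsemigroup.subset_closure hp.2)
    · refine Subsemigroup.closure_le.mpr (fun x hx => ?_)
      have hxE : x ∈ Subsemigroup.closure {e : S | e ∈ T ∧ e * e = e} := by
        rw [hE]; exact Subsemigroup.subset_closure hx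
      have main : ∀ y, y ∈ Subsemigroup.closure {e : S | e ∈ T ∧ e * e = e} →
          y ∈ T ∧ (DRel y a → y ∈ Subsemigroup.closure Pset) := by
        intro y hy
        refine Subsemigroup.closure_induction ?_ ?_ hy
        · rintro e ⟨heT, he2⟩
          refine ⟨heT, fun hDe => ?_⟩
          have hse2 : star e * star e = star e := by rw [← hanti, he2]
          have hreg' : star e * e * star e = star e := by
            have h := hreg (star e); rwa [hinv] at h
          have hp1s : star (e * star e) = e * star e := by rw [hanti, hinv]
          have hp1i : (e * star e) * (e * star e) = e * star e := by
            calc (e * star e) * (e * star e)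
                = e * (star e * e * star e) := by simp only [mul_assoc]
              _ = e * star e := by rw [hreg']
          have hp2s : star (star e * e) = star e * e := by rw [hanti, hinv]
          have hp2i : (star e * e) * (star e * e) = star e * e := by
            calc (star e * e) * (star e * e)
                = star e * (e * star e * e) := by simp only [mul_assoc]
              _ = star e * e := by rw [hreg]
          have hprod : (e * star e) * (star e * e) = e := by
            calc (e * star e) * (star e * e)
                = e * (star e * star e) * e := by simp only [mul_assoc]
              _ = e * star e * e := by rw [hse2]
              _ = e := hreg e
          have hD1 : DRel (e * star e) a :=
            DRel_of_R star hreg ⟨star e, rfl⟩ ⟨e, (hreg e).symm⟩ hDe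
          have hD2 : DRel (star e * e) a :=
            DRel_of_L star hreg ⟨star e, rfl⟩
              ⟨e, by rw [← mul_assoc]; exact (hreg e).symm⟩ hDe
          have hm1 : (e * star e) ∈ Subsemigroup.closure Pset :=
            Subsemigroup.subset_closure ⟨⟨hp1s, hp1i⟩, hD1⟩
          have hm2 : (star e * e) ∈ Subsemigroup.closure Pset :=
            Subsemigroup.subset_closure ⟨⟨hp2s, hp2i⟩, hD2⟩
          have hmul := Subsemigroup.mul_mem _ hm1 hm2
          rwa [hprod] at hmul
        · rintro y z hy hz ⟨hyT, ihy⟩ ⟨hzT, ihz⟩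
          refine ⟨Subsemigroup.mul_mem _ hyT hzT, fun hD => ?_⟩
          have hJyz := leJ_of_DRel star hreg hD
          have hDy : DRel y a := DRel_of_leJ₂ (hleJa y hyT)
            (leJ_trans hJyz.2 (leJ_of_leR star hreg ⟨z, rfl⟩))
          have hDz : DRel z a := DRel_of_leJ₂ (hleJa z hzT)
            (leJ_trans hJyz.2 (leJ_of_leL star hreg ⟨y, rfl⟩))
          exact Subsemigroup.mul_mem _ (ihy hDy) (ihz hDz)
      exact (main x hxE).2 hx
  -- finiteness of P
  have hPfin : Pset.Finite := Set.toFinite _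
  set Pf := hPfin.toFinset with hPf
  have hPcard : Pset.ncard = Pf.card := Set.ncard_eq_toFinset_card _ _
  have hPcoe : (↑Pf : Set S) = Pset := hPfin.coe_toFinset
  -- lower bound
  have lower : ∀ X : Finset S, Subsemigroup.closure (↑X : Set S) = T →
      Pset.ncard ≤ X.card := by
    intro X hX
    have key : ∀ p, p ∈ Pset → ∃ y, y ∈ X ∧ (leR p y ∧ leR y p) := by
      intro p hp
      have hpT : p ∈ Subsemigroup.closure (↑X : Set S) := by
        rw [hX]; exact Subsemigroup.subset_closure hp.2
      obtain ⟨y, hyX, hcase⟩ := mem_factor hpT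
      rcases hcase with rfl | ⟨t, ht⟩
      · exact ⟨p, hyX, leR_refl star hreg p, leR_refl star hreg p⟩
      · have hyT : y ∈ T := by
          rw [← hX]; exact Subsemigroup.subset_closure hyX
        have hJyp : leJ y p := leJ_trans (hleJa y hyT) (leJ_of_DRel star hreg hp.2).2
        have hJ' : leJ y (y * t) := by rw [← ht]; exact hJyp
        have hRy : leR y p := by rw [ht]; exact stR hJ'
        exact ⟨y, hyX, ⟨t, ht⟩, hRy⟩
    choose! f hfX hfR using key
    rw [hPcard]
    refine Finset.card_le_card_of_injOn f
      (fun p hp => hfX p (by rwa [hPcoe] at hp)) ?_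
    intro p hp q hq hfeq
    rw [Set.Finite.coe_toFinset] at hp hq
    have h1 := hfR p hp
    have h2 := hfR q hq
    rw [hfeq] at h1
    exact proj_unique star hanti hp.1.1 hp.1.2 hq.1.1 hq.1.2
      (leR_trans h1.1 h2.2) (leR_trans h2.1 h1.2)
  -- upper bounds
  have hidem : ∀ x ∈ Pf, x * x = x := fun x hx => (hPfin.mem_toFinset.mp hx).1.2
  have hclos : Subsemigroup.closure (↑Pf : Set S) = T := by rw [hPcoe]; exact hPT
  have hmemId : Pset.ncard ∈ {k | ∃ X : Finset S, X.card = k ∧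
      (∀ x ∈ X, x * x = x) ∧ Subsemigroup.closure (↑X : Set S) = T} :=
    ⟨Pf, hPcard.symm, hidem, hclos⟩
  have hmemRk : Pset.ncard ∈ {k | ∃ X : Finset S, X.card = k ∧
      Subsemigroup.closure (↑X : Set S) = T} :=
    ⟨Pf, hPcard.symm, hclos⟩
  have hid_le : sgIdRank T ≤ Pset.ncard := Nat.sInf_le hmemId
  have hrk_le_id : sgRank T ≤ sgIdRank T := by
    have h1 := Nat.sInf_mem (⟨Pset.ncard, hmemId⟩ : Set.Nonempty _)
    obtain ⟨X, hc, _, hcl⟩ := h1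
    exact Nat.sInf_le ⟨X, hc, hcl⟩
  have hrk_ge : Pset.ncard ≤ sgRank T := by
    have h1 := Nat.sInf_mem (⟨Pset.ncard, hmemRk⟩ : Set.Nonempty _)
    obtain ⟨X, hc, hcl⟩ := h1
    show Pset.ncard ≤ sInf {k | ∃ X : Finset S, X.card = k ∧
      Subsemigroup.closure (↑X : Set S) = T}
    rw [← hc]; exact lower X hcl
  refine ⟨hPT, le_antisymm hid_le (hrk_ge.trans hrk_le_id), le_antisymm (hrk_le_id.trans hid_le) hrk_ge⟩
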